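/- Assume objects are w-well-structured and at most k object instances appear in an image. If a contiguous segment of the image of length ℓ ≥ 2wk+1 exactly matches ℓ consecutive pixels of a single object o, then the middle ℓ - 2(w-1)k pixels of that segment form a pure segment truly produced by a single instance of object o. -/
import Mathlib


/-- Object `i`, placed with left endpoint `a`, covers canvas position `x`. -/
def Covers {m : ℕ} (len : Fin m → ℕ) (i : Fin m) (a x : ℤ) : Prop :=
  a ≤ x ∧ x < a + len i

/-- The pixel of object `i` (placed at `a`) lying over position `x` has color `v`. -/
def ObjAt {m c : ℕ} (len : Fin m → ℕ) (obj : ∀ i : Fin m, Fin (len i) → Fin c)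
    (i : Fin m) (a x : ℤ) (v : Fin c) : Prop :=
  ∃ s : Fin (len i), a + (s : ℤ) = x ∧ obj i s = v

def WellStructured (m c w : ℕ) (len : Fin m → ℕ)
    (o : ∀ i : Fin m, Fin (len i) → Fin c) : Prop :=
  (∀ i, w ≤ len i) ∧
  ∀ (i j : Fin m) (p q : ℕ) (hp : p + w ≤ len i) (hq : q + w ≤ len j),
    (i ≠ j ∨ p ≠ q) →
    ¬ ∀ t : Fin w,
        o i ⟨p + t, lt_of_lt_of_le (Nat.add_lt_add_left t.isLt p) hp⟩ =
        o j ⟨q + t, lt_of_lt_of_le (Nat.add_lt_add_left t.isLt q) hq⟩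

/-- Instance `r` (object `ι r` placed at `pos r`, depth equal to index: smaller index
means more in front) produces the pixel at canvas position `x`: it covers `x` and no
instance in front of it covers `x`. -/
def Produced {m : ℕ} (len : Fin m → ℕ) {n : ℕ} (ι : Fin n → Fin m)
    (pos : Fin n → ℤ) (r : Fin n) (x : ℤ) : Prop :=
  Covers len (ι r) (pos r) x ∧ ∀ r' : Fin n, r' < r → ¬ Covers len (ι r') (pos r') x

/-- Signature detection: with `w`-well-structured objects and at most `k` object
instances in the image, if a contiguous image segment `[u, u+ℓ)` of length
`ℓ ≥ 2wk + 1` exactly matches `ℓ` consecutive pixels of a single object `o` (starting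
at `p`), then the middle `ℓ - 2(w-1)k` positions of the segment are all truly produced
by one single instance of object `o`. -/
theorem stmt_16 (m c w k : ℕ) (hw : 0 < w)
    (len : Fin m → ℕ) (obj : ∀ i : Fin m, Fin (len i) → Fin c)
    (hws : WellStructured m c w len obj)
    (n : ℕ) (hn : n ≤ k) (ι : Fin n → Fin m) (hι : Function.Injective ι)
    (pos : Fin n → ℤ)
    (ℓ : ℕ) (hℓ : 2 * w * k + 1 ≤ ℓ)
    (u : ℤ) (o : Fin m) (p : ℕ) (hp : p + ℓ ≤ len o)
    (hmatch : ∀ x : Fin ℓ, ∃ r : Fin n, Produced len ι pos r (u + (x : ℕ)) ∧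
        ObjAt len obj (ι r) (pos r) (u + (x : ℕ))
          (obj o ⟨p + x, lt_of_lt_of_le (Nat.add_lt_add_left x.isLt p) hp⟩)) :
    ∃ r : Fin n, ι r = o ∧
      ∀ q : ℤ, u + ((w - 1) * k : ℕ) ≤ q → q < u + (ℓ : ℤ) - ((w - 1) * k : ℕ) →
        Produced len ι pos r q := by
  classical
  have hℓpos : 0 < ℓ := by omega
  obtain ⟨r0, hr0, -⟩ := hmatch ⟨0, hℓpos⟩
  have hn1 : 0 < n := r0.pos
  have key : ∀ y : ℕ, ∃ r : Fin n, y < ℓ →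
      Produced len ι pos r (u + (y : ℤ)) ∧
      ∃ h : p + y < len o, ObjAt len obj (ι r) (pos r) (u + (y : ℤ)) (obj o ⟨p + y, h⟩) := by
    intro y
    by_cases hy : y < ℓ
    · obtain ⟨r, h1, h2⟩ := hmatch ⟨y, hy⟩
      exact ⟨r, fun _ => ⟨h1, ⟨_, h2⟩⟩⟩
    · exact ⟨r0, fun h => absurd h hy⟩
  choose f hf using key
  have hcov : ∀ y, y < ℓ →
      pos (f y) ≤ u + (y : ℤ) ∧ u + (y : ℤ) < pos (f y) + (len (ι (f y)) : ℤ) :=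
    fun y hy => ((hf y hy).1).1
  have hmin : ∀ y, y < ℓ → ∀ r' : Fin n, r' < f y →
      ¬ Covers len (ι r') (pos r') (u + (y : ℤ)) :=
    fun y hy => ((hf y hy).1).2
  have hobjs : ∀ y, y < ℓ →
      ∃ h : p + y < len o, ObjAt len obj (ι (f y)) (pos (f y)) (u + (y : ℤ)) (obj o ⟨p + y, h⟩) :=
    fun y hy => (hf y hy).2
  -- the matching lemma: a full `w`-run identifies the object and its position
  have match_lem : ∀ (r1 : Fin n) (x : ℕ), x + w ≤ ℓ → (∀ t, t < w → f (x + t) = r1) →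
      ι r1 = o ∧ pos r1 = u - p := by
    intro r1 x hxw hrunx
    have hstep : ∀ t : ℕ, ∀ _ht : t < w, ∃ st : Fin (len (ι r1)),
        pos r1 + (st : ℤ) = u + ((x + t : ℕ) : ℤ) ∧
        obj (ι r1) st = obj o ⟨p + (x + t), (by omega : p + (x + t) < len o)⟩ := by
      intro t ht
      obtain ⟨hpy, hOA⟩ := hobjs (x + t) (by omega)
      rw [hrunx t ht] at hOA
      exact hOA
    obtain ⟨s0, hs0, hobj0⟩ := hstep 0 hw
    have H1 : s0.val + w ≤ len (ι r1) := by
      obtain ⟨sw, hsw, -⟩ := hstep (w - 1) (by omega)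
      have h1 := sw.isLt
      have h2 := s0.isLt
      omega
    have H2 : p + x + w ≤ len o := by omega
    have Hall : ∀ t : Fin w,
        obj (ι r1) ⟨s0.val + ↑t, lt_of_lt_of_le (Nat.add_lt_add_left t.isLt s0.val) H1⟩ =
        obj o ⟨p + x + ↑t, lt_of_lt_of_le (Nat.add_lt_add_left t.isLt (p + x)) H2⟩ := by
      intro t
      obtain ⟨st, h1, h2⟩ := hstep t.val t.isLt
      have hstv : st = ⟨s0.val + ↑t, lt_of_lt_of_le (Nat.add_lt_add_left t.isLt s0.val) H1⟩ :=
        Fin.ext (show st.val = s0.val + t.val by omega)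
      rw [hstv] at h2
      simp only [Nat.add_assoc]
      exact h2
    rcases eq_or_ne (ι r1) o with hio | hio
    · rcases eq_or_ne s0.val (p + x) with hsv | hsv
      · exact ⟨hio, by omega⟩
      · exact absurd Hall (hws.2 (ι r1) o s0.val (p + x) H1 H2 (Or.inr hsv))
    · exact absurd Hall (hws.2 (ι r1) o s0.val (p + x) H1 H2 (Or.inl hio))
  -- decrease / increase transitions pin interval endpoints
  have hdec : ∀ y, y + 1 < ℓ → f (y + 1) < f y → pos (f (y + 1)) = u + (y : ℤ) + 1 := by
    intro y hy hlt'
    have hc1 := hcov (y + 1) hy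
    by_contra hne'
    have hple : pos (f (y + 1)) ≤ u + (y : ℤ) := by omega
    exact hmin y (by omega) (f (y + 1)) hlt' ⟨hple, by omega⟩
  have hinc : ∀ y, y + 1 < ℓ → f y < f (y + 1) →
      pos (f y) + (len (ι (f y)) : ℤ) = u + (y : ℤ) + 1 := by
    intro y hy hlt'
    have hc1 := hcov y (by omega)
    by_contra hne'
    exact hmin (y + 1) hy (f y) hlt' ⟨by omega, by omega⟩
  -- existence of a w-run by counting transitions
  have run_ex : ∃ x, x + w ≤ ℓ ∧ ∀ t, t < w → f (x + t) = f x := by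
    by_contra hno
    push_neg at hno
    have hkey : (2 * k - 2) * (w - 1) + w ≤ 2 * w * k + 1 := by
      have hk1 : 1 ≤ k := by omega
      obtain ⟨k', rfl⟩ : ∃ k', k = k' + 1 := ⟨k - 1, by omega⟩
      obtain ⟨w', rfl⟩ : ∃ w', w = w' + 1 := ⟨w - 1, by omega⟩
      have e1 : 2 * (k' + 1) - 2 = 2 * k' := by omega
      have e2 : w' + 1 - 1 = w' := by omega
      rw [e1, e2]
      nlinarith [Nat.zero_le k', Nat.zero_le w']
    have htrans : ∀ j : Fin (2 * n - 1), ∃ y, j.val * (w - 1) ≤ y ∧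
        y + 2 ≤ j.val * (w - 1) + w ∧ y + 1 < ℓ ∧ f (y + 1) ≠ f y := by
      intro j
      have hj2 : j.val ≤ 2 * n - 2 := by have := j.isLt; omega
      have hjw : j.val * (w - 1) + w ≤ ℓ := by
        have h1 : j.val * (w - 1) ≤ (2 * k - 2) * (w - 1) :=
          Nat.mul_le_mul_right _ (by omega)
        obtain ⟨P1, hP1⟩ : ∃ P1, j.val * (w - 1) = P1 := ⟨_, rfl⟩
        obtain ⟨P2, hP2⟩ : ∃ P2, (2 * k - 2) * (w - 1) = P2 := ⟨_, rfl⟩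
        obtain ⟨P3, hP3⟩ : ∃ P3, 2 * w * k = P3 := ⟨_, rfl⟩
        have h2 := hkey
        have h3 := hℓ
        rw [hP1, hP2] at h1
        rw [hP2, hP3] at h2
        rw [hP3] at h3
        rw [hP1]
        omega
      obtain ⟨X, hXeq⟩ : ∃ X, j.val * (w - 1) = X := ⟨_, rfl⟩
      rw [hXeq] at hjw ⊢
      obtain ⟨t, htw, htne⟩ := hno X hjw
      have hex2 : ∃ t', f (X + t') ≠ f X := ⟨t, htne⟩
      have ht0w : Nat.find hex2 ≤ t := Nat.find_min' hex2 htne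
      have ht01 : 1 ≤ Nat.find hex2 := by
        rcases Nat.eq_zero_or_pos (Nat.find hex2) with h0 | h
        · have hs := Nat.find_spec hex2
          rw [h0, Nat.add_zero] at hs
          exact absurd rfl hs
        · exact h
      have hprev : f (X + (Nat.find hex2 - 1)) = f X :=
        not_not.mp (Nat.find_min hex2 (by omega))
      refine ⟨X + (Nat.find hex2 - 1), by omega, by omega, by omega, ?_⟩
      have h1 : X + (Nat.find hex2 - 1) + 1 = X + Nat.find hex2 := by omega
      rw [h1, hprev]
      exact Nat.find_spec hex2
    choose Y hY1 hY2 hY3 hY4 using htrans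
    have hYmono : ∀ j j' : Fin (2 * n - 1), j.val < j'.val → Y j < Y j' := by
      intro j j' hjj
      have h1 := hY1 j
      have h2 := hY2 j
      have h1' := hY1 j'
      have hmul : (j.val + 1) * (w - 1) ≤ j'.val * (w - 1) :=
        Nat.mul_le_mul_right _ (by omega)
      have hsucc : (j.val + 1) * (w - 1) = j.val * (w - 1) + (w - 1) := Nat.succ_mul _ _
      obtain ⟨P, hP⟩ : ∃ P, j.val * (w - 1) = P := ⟨_, rfl⟩
      obtain ⟨P', hP'⟩ : ∃ P', j'.val * (w - 1) = P' := ⟨_, rfl⟩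
      obtain ⟨Q, hQ⟩ : ∃ Q, (j.val + 1) * (w - 1) = Q := ⟨_, rfl⟩
      rw [hP] at h1 h2 hsucc
      rw [hP'] at h1' hmul
      rw [hQ] at hmul hsucc
      omega
    obtain ⟨g, hg⟩ : ∃ g : Fin (2 * n - 1) → Fin n × Bool, ∀ j,
        g j = if f (Y j + 1) < f (Y j) then (f (Y j + 1), false) else (f (Y j), true) :=
      ⟨_, fun _ => rfl⟩
    have hga : ∀ j, g j ≠ (f 0, false) := by
      intro j hEq
      rw [hg j] at hEq
      rcases lt_or_ge (f (Y j + 1)) (f (Y j)) with h1 | h1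
      · rw [if_pos h1] at hEq
        have he : f (Y j + 1) = f 0 := congrArg Prod.fst hEq
        have hd := hdec (Y j) (hY3 j) h1
        rw [he] at hd
        have hc0 := (hcov 0 hℓpos).1
        omega
      · rw [if_neg (not_lt.mpr h1)] at hEq
        exact Bool.noConfusion (congrArg Prod.snd hEq)
    have hgb : ∀ j, g j ≠ (f (ℓ - 1), true) := by
      intro j hEq
      rw [hg j] at hEq
      rcases lt_or_ge (f (Y j + 1)) (f (Y j)) with h1 | h1
      · rw [if_pos h1] at hEq
        exact Bool.noConfusion (congrArg Prod.snd hEq)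
      · rw [if_neg (not_lt.mpr h1)] at hEq
        have he : f (Y j) = f (ℓ - 1) := congrArg Prod.fst hEq
        have hlt' : f (Y j) < f (Y j + 1) := lt_of_le_of_ne h1 (Ne.symm (hY4 j))
        have hd := hinc (Y j) (hY3 j) hlt'
        rw [he] at hd
        have hcl := (hcov (ℓ - 1) (by omega)).2
        have h3 := hY3 j
        omega
    have hginj : ∀ j j', g j = g j' → j = j' := by
      intro j j' hEq
      by_contra hjj
      have hyne : Y j ≠ Y j' := by
        rcases Nat.lt_or_ge j.val j'.val with hc | hc
        · exact Nat.ne_of_lt (hYmono _ _ hc)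
        · have hc' : j'.val < j.val := by
            rcases Nat.lt_or_ge j'.val j.val with h | h
            · exact h
            · exact absurd (Fin.ext (Nat.le_antisymm h hc)) hjj
          exact (Nat.ne_of_lt (hYmono _ _ hc')).symm
      rw [hg j, hg j'] at hEq
      rcases lt_or_ge (f (Y j + 1)) (f (Y j)) with h1 | h1 <;>
        rcases lt_or_ge (f (Y j' + 1)) (f (Y j')) with h2 | h2
      · rw [if_pos h1, if_pos h2] at hEq
        have he : f (Y j + 1) = f (Y j' + 1) := congrArg Prod.fst hEq
        have hd1 := hdec (Y j) (hY3 j) h1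
        have hd2 := hdec (Y j') (hY3 j') h2
        rw [he] at hd1
        exact hyne (by omega)
      · rw [if_pos h1, if_neg (not_lt.mpr h2)] at hEq
        exact Bool.noConfusion (congrArg Prod.snd hEq)
      · rw [if_neg (not_lt.mpr h1), if_pos h2] at hEq
        exact Bool.noConfusion (congrArg Prod.snd hEq)
      · rw [if_neg (not_lt.mpr h1), if_neg (not_lt.mpr h2)] at hEq
        have he : f (Y j) = f (Y j') := congrArg Prod.fst hEq
        have hlt1 : f (Y j) < f (Y j + 1) := lt_of_le_of_ne h1 (Ne.symm (hY4 j))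
        have hlt2 : f (Y j') < f (Y j' + 1) := lt_of_le_of_ne h2 (Ne.symm (hY4 j'))
        have hd1 := hinc (Y j) (hY3 j) hlt1
        have hd2 := hinc (Y j') (hY3 j') hlt2
        rw [he] at hd1
        exact hyne (by omega)
    have hbne : ((f 0, false) : Fin n × Bool) ≠ (f (ℓ - 1), true) := by
      intro h
      exact Bool.noConfusion (congrArg Prod.snd h)
    have hmem : ∀ j, g j ∈ (Finset.univ.erase ((f (ℓ - 1), true) : Fin n × Bool)).erase
        ((f 0, false) : Fin n × Bool) := by
      intro j
      rw [Finset.mem_erase, Finset.mem_erase]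
      exact ⟨hga j, hgb j, Finset.mem_univ _⟩
    have hb_mem : ((f 0, false) : Fin n × Bool) ∈
        Finset.univ.erase ((f (ℓ - 1), true) : Fin n × Bool) := by
      rw [Finset.mem_erase]
      exact ⟨hbne, Finset.mem_univ _⟩
    have hcard := Finset.card_le_card_of_injOn (s := (Finset.univ : Finset (Fin (2 * n - 1)))) g
      (fun j _ => hmem j) (fun j _ j' _ h => hginj j j' h)
    rw [Finset.card_erase_of_mem hb_mem, Finset.card_erase_of_mem (Finset.mem_univ _)] at hcard
    simp only [Finset.card_univ, Fintype.card_fin, Fintype.card_prod, Fintype.card_bool] at hcard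
    omega
  obtain ⟨x0, hx0w, hx0run⟩ := run_ex
  obtain ⟨hιr, hposr⟩ := match_lem (f x0) x0 hx0w hx0run
  have hpl : (p : ℤ) + (ℓ : ℤ) ≤ (len o : ℤ) := by exact_mod_cast hp
  have hrcov : ∀ q' : ℤ, u ≤ q' → q' < u + (ℓ : ℤ) →
      Covers len (ι (f x0)) (pos (f x0)) q' := by
    intro q' h1 h2
    refine ⟨?_, ?_⟩
    · rw [hposr]; omega
    · rw [hposr, hιr]; omega
  have hltf : ∀ y, y < ℓ → f y ≠ f x0 → f y < f x0 := by
    intro y hy hne'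
    rcases lt_trichotomy (f y) (f x0) with h | h | h
    · exact h
    · exact absurd h hne'
    · exact absurd (hrcov (u + (y : ℤ)) (by omega) (by omega)) (hmin y hy (f x0) h)
  -- the junk lemma: masquerading producers live near the boundary
  have junk : ∀ N, ∀ y, y < ℓ → (f y).val < N → f y ≠ f x0 →
      (y < (w - 1) * ((f y).val + 1) ∨ ℓ ≤ y + (w - 1) * ((f y).val + 1)) := by
    intro N
    induction N with
    | zero => intro y _ h _; omega
    | succ N ih =>
      intro y hy hNv hne
      have hyr0 : f y < f x0 := hltf y hy hne
      have hLex : ∃ d, y < d ∨ f (y - d) ≠ f y := ⟨y + 1, Or.inl (by omega)⟩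
      have hRex : ∃ d, ℓ ≤ y + d ∨ f (y + d) ≠ f y := ⟨ℓ, Or.inl (by omega)⟩
      obtain ⟨dl, hdlspec, hdlmin, hdlub⟩ :
          ∃ dl, (y < dl ∨ f (y - dl) ≠ f y) ∧ (∀ e, e < dl → e ≤ y ∧ f (y - e) = f y) ∧
            dl ≤ y + 1 :=
        ⟨Nat.find hLex, Nat.find_spec hLex,
          fun e he => by
            have h := Nat.find_min hLex he
            push_neg at h
            exact ⟨h.1, h.2⟩,
          Nat.find_min' hLex (Or.inl (by omega))⟩
      obtain ⟨dr, hdrspec, hdrmin, hdrub⟩ :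
          ∃ dr, (ℓ ≤ y + dr ∨ f (y + dr) ≠ f y) ∧ (∀ e, e < dr → y + e < ℓ ∧ f (y + e) = f y) ∧
            dr ≤ ℓ :=
        ⟨Nat.find hRex, Nat.find_spec hRex,
          fun e he => by
            have h := Nat.find_min hRex he
            push_neg at h
            exact ⟨h.1, h.2⟩,
          Nat.find_min' hRex (Or.inl (by omega))⟩
      have hdl1 : 1 ≤ dl := by
        rcases Nat.eq_zero_or_pos dl with h0 | h
        · exfalso
          rw [h0] at hdlspec
          rcases hdlspec with h | h
          · omega
          · rw [Nat.sub_zero] at h; exact h rfl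
        · exact h
      have hdr1 : 1 ≤ dr := by
        rcases Nat.eq_zero_or_pos dr with h0 | h
        · exfalso
          rw [h0] at hdrspec
          rcases hdrspec with h | h
          · omega
          · rw [Nat.add_zero] at h; exact h rfl
        · exact h
      have hrun2 : ∀ z, y ≤ z + (dl - 1) → z ≤ y + (dr - 1) → f z = f y := by
        intro z hz1 hz2
        rcases le_or_gt z y with h | h
        · have h3 := hdlmin (y - z) (by omega)
          rw [show y - (y - z) = z by omega] at h3
          exact h3.2
        · have h3 := hdrmin (z - y) (by omega)
          rw [show y + (z - y) = z by omega] at h3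
          exact h3.2
      have hlen : dl + dr ≤ w := by
        by_contra hcon
        push_neg at hcon
        have h1 := (hdrmin (dr - 1) (by omega)).1
        have hs_w : (y - (dl - 1)) + w ≤ ℓ := by omega
        have hall : ∀ t, t < w → f (y - (dl - 1) + t) = f y := by
          intro t ht
          exact hrun2 _ (by omega) (by omega)
        obtain ⟨hio1, -⟩ := match_lem (f y) (y - (dl - 1)) hs_w hall
        exact hne (hι (hio1.trans hιr.symm))
      rcases Nat.lt_or_ge y dl with hb | hdly
      · left
        have h1 : (w - 1) * 1 ≤ (w - 1) * ((f y).val + 1) := Nat.mul_le_mul_left _ (by omega)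
        rw [Nat.mul_one] at h1
        obtain ⟨A, hA⟩ : ∃ A, (w - 1) * ((f y).val + 1) = A := ⟨_, rfl⟩
        rw [hA] at h1 ⊢
        omega
      rcases le_or_gt ℓ (y + dr) with hb | hyrlt
      · right
        have h1 : (w - 1) * 1 ≤ (w - 1) * ((f y).val + 1) := Nat.mul_le_mul_left _ (by omega)
        rw [Nat.mul_one] at h1
        obtain ⟨A, hA⟩ : ∃ A, (w - 1) * ((f y).val + 1) = A := ⟨_, rfl⟩
        rw [hA] at h1 ⊢
        omega
      have hL1 : f (y - dl) ≠ f y := by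
        rcases hdlspec with h | h
        · exact absurd h (by omega)
        · exact h
      have hR1 : f (y + dr) ≠ f y := by
        rcases hdrspec with h | h
        · exact absurd h (by omega)
        · exact h
      have hyl_lt : y - dl < ℓ := by omega
      have hfs : f (y - dl + 1) = f y := hrun2 _ (by omega) (by omega)
      have hcovs := hcov (y - dl + 1) (by omega)
      rw [hfs] at hcovs
      obtain ⟨hcs1, hcs2⟩ := hcovs
      have hwlen : w ≤ len (ι (f y)) := hws.1 _
      rcases le_or_gt (pos (f y)) (u + ((y - dl : ℕ) : ℤ)) with hcA | hcB
      · -- the run's instance covers the left neighbor, so the left producer is in front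
        have hltl : f (y - dl) < f y := by
          rcases lt_trichotomy (f (y - dl)) (f y) with h | h | h
          · exact h
          · exact absurd h hL1
          · exact absurd ⟨hcA, by omega⟩ (hmin (y - dl) hyl_lt (f y) h)
        have hner : f (y - dl) ≠ f x0 := by
          intro hc
          rw [hc] at hltl
          exact absurd (lt_trans hltl hyr0) (lt_irrefl _)
        have hvl : (f (y - dl)).val < (f y).val := hltl
        rcases ih (y - dl) hyl_lt (by omega) hner with hc | hc
        · left
          have hmul2 : (w - 1) * ((f (y - dl)).val + 1 + 1) ≤ (w - 1) * ((f y).val + 1) :=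
            Nat.mul_le_mul_left _ (by omega)
          have hexp : (w - 1) * ((f (y - dl)).val + 1 + 1) =
              (w - 1) * ((f (y - dl)).val + 1) + (w - 1) := Nat.mul_succ _ _
          obtain ⟨A, hA⟩ : ∃ A, (w - 1) * ((f (y - dl)).val + 1) = A := ⟨_, rfl⟩
          obtain ⟨B, hB⟩ : ∃ B, (w - 1) * ((f y).val + 1) = B := ⟨_, rfl⟩
          rw [hA] at hc hexp
          rw [hB] at hmul2 ⊢
          rw [hexp] at hmul2
          omega
        · right
          have hmul2 : (w - 1) * ((f (y - dl)).val + 1) ≤ (w - 1) * ((f y).val + 1) :=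
            Nat.mul_le_mul_left _ (by omega)
          obtain ⟨A, hA⟩ : ∃ A, (w - 1) * ((f (y - dl)).val + 1) = A := ⟨_, rfl⟩
          obtain ⟨B, hB⟩ : ∃ B, (w - 1) * ((f y).val + 1) = B := ⟨_, rfl⟩
          rw [hA] at hc hmul2
          rw [hB] at hmul2 ⊢
          omega
      · -- the run's instance starts exactly at the run start, so it covers the right neighbor
        have hposy : pos (f y) = u + ((y - dl + 1 : ℕ) : ℤ) := by omega
        have hcovr : Covers len (ι (f y)) (pos (f y)) (u + ((y + dr : ℕ) : ℤ)) := by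
          refine ⟨?_, ?_⟩
          · rw [hposy]; omega
          · omega
        have hltr3 : f (y + dr) < f y := by
          rcases lt_trichotomy (f (y + dr)) (f y) with h | h | h
          · exact h
          · exact absurd h hR1
          · exact absurd hcovr (hmin (y + dr) hyrlt (f y) h)
        have hner3 : f (y + dr) ≠ f x0 := by
          intro hc
          rw [hc] at hltr3
          exact absurd (lt_trans hltr3 hyr0) (lt_irrefl _)
        have hvr : (f (y + dr)).val < (f y).val := hltr3
        rcases ih (y + dr) hyrlt (by omega) hner3 with hc | hc
        · left
          have hmul2 : (w - 1) * ((f (y + dr)).val + 1) ≤ (w - 1) * ((f y).val + 1) :=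
            Nat.mul_le_mul_left _ (by omega)
          obtain ⟨A, hA⟩ : ∃ A, (w - 1) * ((f (y + dr)).val + 1) = A := ⟨_, rfl⟩
          obtain ⟨B, hB⟩ : ∃ B, (w - 1) * ((f y).val + 1) = B := ⟨_, rfl⟩
          rw [hA] at hc hmul2
          rw [hB] at hmul2 ⊢
          omega
        · right
          have hmul2 : (w - 1) * ((f (y + dr)).val + 1 + 1) ≤ (w - 1) * ((f y).val + 1) :=
            Nat.mul_le_mul_left _ (by omega)
          have hexp : (w - 1) * ((f (y + dr)).val + 1 + 1) =
              (w - 1) * ((f (y + dr)).val + 1) + (w - 1) := Nat.mul_succ _ _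
          obtain ⟨A, hA⟩ : ∃ A, (w - 1) * ((f (y + dr)).val + 1) = A := ⟨_, rfl⟩
          obtain ⟨B, hB⟩ : ∃ B, (w - 1) * ((f y).val + 1) = B := ⟨_, rfl⟩
          rw [hA] at hc hexp
          rw [hB] at hmul2 ⊢
          rw [hexp] at hmul2
          omega
  refine ⟨f x0, hιr, ?_⟩
  intro q hq1 hq2
  obtain ⟨M, hM⟩ : ∃ M, (w - 1) * k = M := ⟨_, rfl⟩
  rw [hM] at hq1 hq2
  obtain ⟨x, hx⟩ : ∃ x : ℕ, (x : ℤ) = q - u := ⟨(q - u).toNat, by omega⟩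
  have hxℓ : x < ℓ := by omega
  have hpx := (hf x hxℓ).1
  have hqx : u + (x : ℤ) = q := by omega
  rw [hqx] at hpx
  by_cases hfx : f x = f x0
  · rw [← hfx]; exact hpx
  · exfalso
    have hj := junk n x hxℓ (f x).isLt hfx
    have hmul : (w - 1) * ((f x).val + 1) ≤ (w - 1) * k :=
      Nat.mul_le_mul_left _ (by have := (f x).isLt; omega)
    obtain ⟨A, hA⟩ : ∃ A, (w - 1) * ((f x).val + 1) = A := ⟨_, rfl⟩
    rw [hA] at hj hmul
    rw [hM] at hmul
    rcases hj with h | h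
    · omega
    · omega
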